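/- Let k ≥ 8, n ≥ k², m = ⌊n/k²⌋, and f defined by cyclic occurrence of the pattern g. Then s⁰(f) ≥ m: there exists x with f(x) = 0 and at least m indices i with f(x^i) = 1. A witness is x = (1\underline{0}0^{k-2}(111110^{k-5})^{k-2}111110^{k-8}111)^m 0^r with r = n − k²m, where flipping any of the m underlined zeros (the second bit of each length-k² segment) creates an occurrence of the pattern. -/

import Mathlib

/-- Flip the `i`-th bit of `x`. -/
def flipBit {n : ℕ} (x : Fin n → Bool) (i : Fin n) : Fin n → Bool :=
  fun j => if j = i then !x j else x j

/-- Flip all bits of `x` in the block `B`. -/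
def flipSet {n : ℕ} (x : Fin n → Bool) (B : Finset (Fin n)) : Fin n → Bool :=
  fun j => if j ∈ B then !x j else x j

/-- Sensitivity of `f` at the input `x`. -/
def sensAt {n : ℕ} (f : (Fin n → Bool) → Bool) (x : Fin n → Bool) : ℕ :=
  (Finset.univ.filter fun i => f (flipBit x i) ≠ f x).card

/-- Sensitivity of `f`. -/
def sens {n : ℕ} (f : (Fin n → Bool) → Bool) : ℕ :=
  Finset.univ.sup fun x => sensAt f x

/-- 0-sensitivity of `f`: max sensitivity over inputs where `f` is 0. -/
def sens0 {n : ℕ} (f : (Fin n → Bool) → Bool) : ℕ :=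
  (Finset.univ.filter fun x => f x = false).sup fun x => sensAt f x

/-- 1-sensitivity of `f`: max sensitivity over inputs where `f` is 1. -/
def sens1 {n : ℕ} (f : (Fin n → Bool) → Bool) : ℕ :=
  (Finset.univ.filter fun x => f x = true).sup fun x => sensAt f x

/-- Block sensitivity of `f` at `x`: the largest number of pairwise disjoint
nonempty blocks each of whose flips changes the value of `f` at `x`. -/
noncomputable def bsensAt {n : ℕ} (f : (Fin n → Bool) → Bool) (x : Fin n → Bool) : ℕ :=
  sSup {r : ℕ | ∃ B : Fin r → Finset (Fin n),
    (∀ j, (B j).Nonempty ∧ f (flipSet x (B j)) ≠ f x) ∧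
    ∀ j j', j ≠ j' → Disjoint (B j) (B j')}

/-- Block sensitivity of `f`. -/
noncomputable def bsens {n : ℕ} (f : (Fin n → Bool) → Bool) : ℕ :=
  Finset.univ.sup fun x => bsensAt f x

/-- The pattern predicate defining `g : {0,1}^{k²} → {0,1}`, reading a word as
`k` blocks of length `k`: block 1 equals `110^{k-2}`, the first five bits of
blocks `2..k` are 1, and the last three bits of block `k` are 1. -/
def GPat (k : ℕ) (z : ℕ → Bool) : Prop :=
  (∀ t < k, z t = decide (t < 2)) ∧
  (∀ j, 1 ≤ j → j < k → ∀ t < 5, z (j * k + t) = true) ∧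
  (∀ t, k - 3 ≤ t → t < k → z ((k - 1) * k + t) = true)

open Classical in
/-- The cyclically invariant function `f : {0,1}^n → {0,1}` with
`f(x) = 1` iff `x`, viewed cyclically, contains a contiguous length-`k²`
substring on which `g` evaluates to 1. -/
noncomputable def cycPatFn (k n : ℕ) (hn : 0 < n) : (Fin n → Bool) → Bool :=
  fun x => decide (∃ ℓ : ℕ, GPat k (fun t => x ⟨(ℓ + t) % n, Nat.mod_lt _ hn⟩))



def baseB (k s : ℕ) : Bool :=
  (s == 0) || (decide (k ≤ s) && (decide (s % k < 5) || decide (k ^ 2 - 3 ≤ s)))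

lemma baseB_iff (k s : ℕ) :
    baseB k s = true ↔ (s = 0 ∨ (k ≤ s ∧ (s % k < 5 ∨ k ^ 2 - 3 ≤ s))) := by
  simp [baseB]

def wit (k n : ℕ) : Fin n → Bool :=
  fun p => decide (p.val < k ^ 2 * (n / k ^ 2)) && baseB k (p.val % k ^ 2)

lemma wit_eval (k n p : ℕ) (h : p < n) :
    wit k n ⟨p, h⟩ = (decide (p < k ^ 2 * (n / k ^ 2)) && baseB k (p % k ^ 2)) := rfl

lemma mod_helper (K q c : ℕ) (h : c < K) : (K * q + c) % K = c := by
  rw [Nat.mul_add_mod, Nat.mod_eq_of_lt h]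

lemma baseB_zero (k : ℕ) : baseB k 0 = true := by simp [baseB]

lemma baseB_false (k t : ℕ) (h1 : t ≠ 0) (h2 : t < k) : baseB k t = false := by
  cases hb : baseB k t with
  | false => rfl
  | true =>
    rcases (baseB_iff k t).mp hb with h | ⟨h, _⟩ <;> omega

lemma baseB_hi (k s : ℕ) (h1 : k ≤ s) (h2 : k ^ 2 - 3 ≤ s) : baseB k s = true :=
  (baseB_iff k s).mpr (Or.inr ⟨h1, Or.inr h2⟩)

lemma baseB_run (k j t : ℕ) (h1 : k ≤ k * j + t) (htk : t < k) (ht5 : t < 5) :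
    baseB k (k * j + t) = true :=
  (baseB_iff _ _).mpr (Or.inr ⟨h1, Or.inl (by rw [mod_helper k j t htk]; exact ht5)⟩)

lemma wit_at_lt (k n p : ℕ) (hpn : p < n) (h : p % n < n) :
    wit k n ⟨p % n, h⟩ = (decide (p < k ^ 2 * (n / k ^ 2)) && baseB k (p % k ^ 2)) := by
  have : p % n = p := Nat.mod_eq_of_lt hpn
  simp only [this]
  rfl

lemma wit_at_ge (k n p : ℕ) (hpn : n ≤ p) (hp2 : p - n < n) (h : p % n < n) :
    wit k n ⟨p % n, h⟩ =
      (decide (p - n < k ^ 2 * (n / k ^ 2)) && baseB k ((p - n) % k ^ 2)) := by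
  have : p % n = p - n := by
    rw [Nat.mod_eq_sub_mod hpn, Nat.mod_eq_of_lt hp2]
  simp only [this]
  rfl



lemma wit_no_pat {k n : ℕ} (h8 : 8 ≤ k) (hn : k ^ 2 ≤ n) (hpos : 0 < n) (ℓ : ℕ) :
    ¬ GPat k (fun t => wit k n ⟨(ℓ + t) % n, Nat.mod_lt _ hpos⟩) := by
  rintro ⟨H1, H2, H3⟩
  clear H3
  simp only [] at H1 H2
  have hKpos : 0 < k ^ 2 := by positivity
  have hkk : k + 56 ≤ k ^ 2 := by nlinarith
  have hk2 : k ^ 2 = k * k := pow_two k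
  obtain ⟨r, hrdef⟩ : ∃ r, n % k ^ 2 = r := ⟨_, rfl⟩
  have hnr : k ^ 2 * (n / k ^ 2) + r = n := by
    rw [← hrdef]; exact Nat.div_add_mod n (k ^ 2)
  have hrK : r < k ^ 2 := by rw [← hrdef]; exact Nat.mod_lt _ hKpos
  have hM1 : 1 ≤ n / k ^ 2 := (Nat.one_le_div_iff hKpos).mpr hn
  have hKM : k ^ 2 * (n / k ^ 2) ≤ n := by omega
  have hmod : ∀ t : ℕ, (ℓ + t) % n = (ℓ % n + t) % n := fun t => (Nat.mod_add_mod ℓ n t).symm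
  obtain ⟨a, hadef⟩ : ∃ a, ℓ % n = a := ⟨_, rfl⟩
  simp only [hmod, hadef] at H1 H2
  have han : a < n := hadef ▸ Nat.mod_lt _ hpos
  have h0 := H1 0 (by omega)
  rw [wit_at_lt k n (a + 0) (by omega)] at h0
  simp only [Nat.add_zero] at h0
  rw [show (decide ((0:ℕ) < 2)) = true from by norm_num, Bool.and_eq_true,
    decide_eq_true_eq] at h0
  obtain ⟨haM, hbase⟩ := h0
  obtain ⟨q, hqdef⟩ : ∃ q, a / k ^ 2 = q := ⟨_, rfl⟩
  obtain ⟨s, hsdef⟩ : ∃ s, a % k ^ 2 = s := ⟨_, rfl⟩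
  have haqs : k ^ 2 * q + s = a := by
    rw [← hqdef, ← hsdef]; exact Nat.div_add_mod a (k ^ 2)
  have hsK : s < k ^ 2 := by rw [← hsdef]; exact Nat.mod_lt _ hKpos
  have hqM : q < n / k ^ 2 := by
    rw [← hqdef]
    exact (Nat.div_lt_iff_lt_mul hKpos).mpr (by rw [Nat.mul_comm]; exact haM)
  rw [hsdef] at hbase
  have hqsucc : k ^ 2 * (q + 1) = k ^ 2 * q + k ^ 2 := Nat.mul_succ _ _
  have hq1M : k ^ 2 * (q + 1) ≤ k ^ 2 * (n / k ^ 2) := Nat.mul_le_mul (le_refl _) hqM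
  rcases (baseB_iff k s).mp hbase with hs0 | ⟨hks, hB | hC⟩
  · -- Case A : s = 0 ; position a+1 carries a 0 but the pattern wants 1
    have h := H1 1 (by omega)
    rw [wit_at_lt k n (a + 1) (by omega)] at h
    have e2 : (a + 1) % k ^ 2 = 1 := by
      have e1 : a + 1 = k ^ 2 * q + 1 := by omega
      rw [e1]; exact mod_helper _ _ _ (by omega)
    rw [e2, baseB_false k 1 (by omega) (by omega)] at h
    simp at h
  · -- Case B : s = k*j + t with 1 ≤ j < k, t < 5
    obtain ⟨j, hjdef⟩ : ∃ j, s / k = j := ⟨_, rfl⟩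
    obtain ⟨t, htdef⟩ : ∃ t, s % k = t := ⟨_, rfl⟩
    have hjs : k * j + t = s := by rw [← hjdef, ← htdef]; exact Nat.div_add_mod s k
    have htk : t < k := by rw [← htdef]; exact Nat.mod_lt _ (by omega)
    have hj1 : 1 ≤ j := by rw [← hjdef]; exact (Nat.one_le_div_iff (by omega)).mpr hks
    have hjk : j < k := by
      rw [← hjdef]; exact (Nat.div_lt_iff_lt_mul (by omega)).mpr (by omega)
    have ht5 : t < 5 := by rw [← htdef]; exact hB
    have hjsucc : k * (j + 1) = k * j + k := Nat.mul_succ _ _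
    have hjmul : k * (j + 1) ≤ k * k := Nat.mul_le_mul (le_refl _) hjk
    rcases Nat.lt_or_ge t 3 with ht3 | ht3
    · -- B1 : t ≤ 2, position a+2 carries a 1
      have h := H1 2 (by omega)
      have hlt : a + 2 < n := by omega
      rw [wit_at_lt k n (a + 2) hlt] at h
      have e2 : (a + 2) % k ^ 2 = k * j + (t + 2) := by
        have e1 : a + 2 = k ^ 2 * q + (k * j + (t + 2)) := by omega
        rw [e1]; exact mod_helper _ _ _ (by omega)
      rw [e2, baseB_run k j (t + 2) (by omega) (by omega) (by omega),
        decide_eq_true (show a + 2 < k ^ 2 * (n / k ^ 2) by omega)] at h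
      simp at h
    · rcases Nat.lt_or_ge (j + 1) k with hjk1 | hjk1
      · -- B2 : next block head k*(j+1) carries a 1
        have hj2 : k * (j + 2) = k * (j + 1) + k := Nat.mul_succ _ _
        have hj2le : k * (j + 2) ≤ k * k := Nat.mul_le_mul (le_refl _) hjk1
        have h := H1 (k - t) (by omega)
        have hlt : a + (k - t) < n := by omega
        rw [wit_at_lt k n (a + (k - t)) hlt] at h
        have e2 : (a + (k - t)) % k ^ 2 = k * (j + 1) + 0 := by
          have e1 : a + (k - t) = k ^ 2 * q + (k * (j + 1) + 0) := by omega
          rw [e1]; exact mod_helper _ _ _ (by omega)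
        rw [e2, baseB_run k (j + 1) 0 (by omega) (by omega) (by omega),
          decide_eq_true (show a + (k - t) < k ^ 2 * (n / k ^ 2) by omega),
          decide_eq_false (show ¬(k - t < 2) by omega)] at h
        simp at h
      · -- j + 1 = k : we are in the last block
        have hkkj : k * j + k = k * k := by
          have h' : j + 1 = k := by omega
          calc k * j + k = k * (j + 1) := (Nat.mul_succ k j).symm
            _ = k * k := by rw [h']
        rcases Nat.lt_or_ge (t + 5) (k + 1) with htk5 | htk5
        · -- B3 : t + 5 ≤ k ; position k^2 - 3 carries a 1
          have h := H1 (k - 3 - t) (by omega)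
          have hlt : a + (k - 3 - t) < n := by omega
          rw [wit_at_lt k n (a + (k - 3 - t)) hlt] at h
          have e2 : (a + (k - 3 - t)) % k ^ 2 = k ^ 2 - 3 := by
            have e1 : a + (k - 3 - t) = k ^ 2 * q + (k ^ 2 - 3) := by omega
            rw [e1]; exact mod_helper _ _ _ (by omega)
          rw [e2, baseB_hi k (k ^ 2 - 3) (by omega) (by omega),
            decide_eq_true (show a + (k - 3 - t) < k ^ 2 * (n / k ^ 2) by omega),
            decide_eq_false (show ¬(k - 3 - t < 2) by omega)] at h
          simp at h
        · -- B4 : k ≤ t + 4 (so k = 8, t = 4) ; position a+2 carries a 1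
          have h := H1 2 (by omega)
          have hlt : a + 2 < n := by omega
          rw [wit_at_lt k n (a + 2) hlt] at h
          have e2 : (a + 2) % k ^ 2 = s + 2 := by
            have e1 : a + 2 = k ^ 2 * q + (s + 2) := by omega
            rw [e1]; exact mod_helper _ _ _ (by omega)
          rw [e2, baseB_hi k (s + 2) (by omega) (by omega),
            decide_eq_true (show a + 2 < k ^ 2 * (n / k ^ 2) by omega)] at h
          simp at h
  · -- Case C : k^2 - 3 ≤ s
    rcases (show s = k ^ 2 - 3 ∨ s = k ^ 2 - 2 ∨ s = k ^ 2 - 1 from by omega) with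
      hs | hs | hs
    · -- C1 : s = k^2 - 3 ; position a+2 (residue k^2-1) carries a 1
      have h := H1 2 (by omega)
      have hlt : a + 2 < n := by omega
      rw [wit_at_lt k n (a + 2) hlt] at h
      have e2 : (a + 2) % k ^ 2 = k ^ 2 - 1 := by
        have e1 : a + 2 = k ^ 2 * q + (k ^ 2 - 1) := by omega
        rw [e1]; exact mod_helper _ _ _ (by omega)
      rw [e2, baseB_hi k (k ^ 2 - 1) (by omega) (by omega),
        decide_eq_true (show a + 2 < k ^ 2 * (n / k ^ 2) by omega)] at h
      simp at h
    · -- C2 : s = k^2 - 2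
      rcases Nat.lt_or_ge (q + 1) (n / k ^ 2) with hq1 | hq1
      · -- C2a : next segment exists ; position a+2 (residue 0) carries a 1
        have hq2 : k ^ 2 * (q + 2) = k ^ 2 * (q + 1) + k ^ 2 := Nat.mul_succ _ _
        have hq2M : k ^ 2 * (q + 2) ≤ k ^ 2 * (n / k ^ 2) := Nat.mul_le_mul (le_refl _) hq1
        have h := H1 2 (by omega)
        have hlt : a + 2 < n := by omega
        rw [wit_at_lt k n (a + 2) hlt] at h
        have e2 : (a + 2) % k ^ 2 = 0 := by
          have e1 : a + 2 = k ^ 2 * (q + 1) + 0 := by omega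
          rw [e1]; exact mod_helper _ _ _ (by omega)
        rw [e2, baseB_zero, decide_eq_true (show a + 2 < k ^ 2 * (n / k ^ 2) by omega)] at h
        simp at h
      · -- q + 1 = M : a = k^2 * M - 2
        have hqMeq : k ^ 2 * (q + 1) = k ^ 2 * (n / k ^ 2) := by
          rw [show q + 1 = n / k ^ 2 from by omega]
        rcases Nat.eq_zero_or_pos r with hr0 | hr1
        · -- C2b : r = 0 ; position a+2 wraps to 0 which carries a 1
          have h := H1 2 (by omega)
          rw [wit_at_ge k n (a + 2) (by omega) (by omega)] at h
          have e2 : a + 2 - n = 0 := by omega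
          rw [e2, Nat.zero_mod, baseB_zero,
            decide_eq_true (show (0 : ℕ) < k ^ 2 * (n / k ^ 2) by omega)] at h
          simp at h
        · rcases (show r ≤ k - 3 ∨ r = k - 2 ∨ k - 1 ≤ r from by omega) with hr | hr | hr
          · -- C2c-i : position a + (r+2) wraps to 0 which carries a 1
            have h := H1 (r + 2) (by omega)
            rw [wit_at_ge k n (a + (r + 2)) (by omega) (by omega)] at h
            have e2 : a + (r + 2) - n = 0 := by omega
            rw [e2, Nat.zero_mod, baseB_zero,
              decide_eq_true (show (0 : ℕ) < k ^ 2 * (n / k ^ 2) by omega),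
              decide_eq_false (show ¬(r + 2 < 2) by omega)] at h
            simp at h
          · -- C2c-ii : r = k - 2 ; block-2 position k+1 wraps to 1 which carries a 0
            have h := H2 1 le_rfl (by omega) 1 (by omega)
            rw [wit_at_ge k n (a + (1 * k + 1)) (by omega) (by omega)] at h
            have e2 : a + (1 * k + 1) - n = 1 := by omega
            rw [e2, Nat.mod_eq_of_lt (show 1 < k ^ 2 by omega),
              baseB_false k 1 (by omega) (by omega)] at h
            simp at h
          · -- C2c-iii : r ≥ k - 1 ; block-2 position k lands in the zero tail
            have h := H2 1 le_rfl (by omega) 0 (by omega)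
            rw [wit_at_lt k n (a + (1 * k + 0)) (by omega)] at h
            rw [decide_eq_false
              (show ¬(a + (1 * k + 0) < k ^ 2 * (n / k ^ 2)) by omega)] at h
            simp at h
    · -- D : s = k^2 - 1
      rcases Nat.lt_or_ge (q + 1) (n / k ^ 2) with hq1 | hq1
      · -- D1 : block-2 position k lands at residue k-1 which carries a 0
        have hq2 : k ^ 2 * (q + 2) = k ^ 2 * (q + 1) + k ^ 2 := Nat.mul_succ _ _
        have hq2M : k ^ 2 * (q + 2) ≤ k ^ 2 * (n / k ^ 2) := Nat.mul_le_mul (le_refl _) hq1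
        have h := H2 1 le_rfl (by omega) 0 (by omega)
        have hlt : a + (1 * k + 0) < n := by omega
        rw [wit_at_lt k n (a + (1 * k + 0)) hlt] at h
        have e2 : (a + (1 * k + 0)) % k ^ 2 = k - 1 := by
          have e1 : a + (1 * k + 0) = k ^ 2 * (q + 1) + (k - 1) := by omega
          rw [e1]; exact mod_helper _ _ _ (by omega)
        rw [e2, baseB_false k (k - 1) (by omega) (by omega)] at h
        simp at h
      · have hqMeq : k ^ 2 * (q + 1) = k ^ 2 * (n / k ^ 2) := by
          rw [show q + 1 = n / k ^ 2 from by omega]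
        rcases Nat.eq_zero_or_pos r with hr0 | hr1
        · -- D3 : r = 0 ; block-2 position k wraps to k-1 which carries a 0
          have h := H2 1 le_rfl (by omega) 0 (by omega)
          rw [wit_at_ge k n (a + (1 * k + 0)) (by omega) (by omega)] at h
          have e2 : a + (1 * k + 0) - n = k - 1 := by omega
          rw [e2, Nat.mod_eq_of_lt (show k - 1 < k ^ 2 by omega),
            baseB_false k (k - 1) (by omega) (by omega)] at h
          simp at h
        · -- D2 : r ≥ 1 ; position a+1 lands in the zero tail but the pattern wants 1
          have h := H1 1 (by omega)
          rw [wit_at_lt k n (a + 1) (by omega)] at h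
          rw [decide_eq_false (show ¬(a + 1 < k ^ 2 * (n / k ^ 2)) by omega)] at h
          simp at h

lemma wit_flip_pat {k n : ℕ} (h8 : 8 ≤ k) (hn : k ^ 2 ≤ n) (hpos : 0 < n)
    {q : ℕ} (hq : q < n / k ^ 2) (hi : k ^ 2 * q + 1 < n) :
    GPat k (fun t =>
      flipBit (wit k n) ⟨k ^ 2 * q + 1, hi⟩ ⟨(k ^ 2 * q + t) % n, Nat.mod_lt _ hpos⟩) := by
  have hKpos : 0 < k ^ 2 := by positivity
  have hkk : k + 56 ≤ k ^ 2 := by nlinarith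
  have hk2 : k ^ 2 = k * k := pow_two k
  have hqsucc : k ^ 2 * (q + 1) = k ^ 2 * q + k ^ 2 := Nat.mul_succ _ _
  have hq1M : k ^ 2 * (q + 1) ≤ k ^ 2 * (n / k ^ 2) := Nat.mul_le_mul (le_refl _) hq
  have hKM : k ^ 2 * (n / k ^ 2) ≤ n := by
    conv_rhs => rw [← Nat.div_add_mod n (k ^ 2)]
    exact Nat.le_add_right _ _
  have hval : ∀ t, t < k ^ 2 → t ≠ 1 →
      flipBit (wit k n) ⟨k ^ 2 * q + 1, hi⟩ ⟨(k ^ 2 * q + t) % n, Nat.mod_lt _ hpos⟩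
        = baseB k t := by
    intro t htK ht1
    have hlt : k ^ 2 * q + t < n := by omega
    have hmodn : (k ^ 2 * q + t) % n = k ^ 2 * q + t := Nat.mod_eq_of_lt hlt
    have hne : (⟨(k ^ 2 * q + t) % n, Nat.mod_lt _ hpos⟩ : Fin n) ≠ ⟨k ^ 2 * q + 1, hi⟩ := by
      simp only [ne_eq, Fin.mk.injEq, hmodn]
      omega
    show (if _ = _ then _ else _) = _
    rw [if_neg hne, wit_at_lt k n (k ^ 2 * q + t) hlt, mod_helper _ _ _ htK,
      decide_eq_true (show k ^ 2 * q + t < k ^ 2 * (n / k ^ 2) by omega), Bool.true_and]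
  refine ⟨?_, ?_, ?_⟩
  · intro t htk
    beta_reduce
    by_cases h1 : t = 1
    · subst h1
      have heq : (⟨(k ^ 2 * q + 1) % n, Nat.mod_lt _ hpos⟩ : Fin n) = ⟨k ^ 2 * q + 1, hi⟩ := by
        simp only [Fin.mk.injEq]
        exact Nat.mod_eq_of_lt hi
      show (if _ = _ then _ else _) = _
      rw [if_pos heq, heq]
      show (!(decide _ && baseB k ((k ^ 2 * q + 1) % k ^ 2))) = _
      rw [mod_helper _ _ _ (by omega), baseB_false k 1 (by omega) (by omega)]
      simp
    · rw [hval t (by omega) h1]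
      by_cases h0 : t = 0
      · subst h0
        rw [baseB_zero]
        simp
      · rw [baseB_false k t h0 htk, decide_eq_false (show ¬(t < 2) by omega)]
  · intro j hj1 hjk t ht5
    beta_reduce
    have hjsucc : k * (j + 1) = k * j + k := Nat.mul_succ _ _
    have hjmul : k * (j + 1) ≤ k * k := Nat.mul_le_mul (le_refl _) hjk
    have hj1k : k * 1 ≤ k * j := Nat.mul_le_mul (le_refl _) hj1
    have hjeq : j * k + t = k * j + t := by rw [Nat.mul_comm]
    rw [hjeq, hval (k * j + t) (by omega) (by omega),
      baseB_run k j t (by omega) (by omega) ht5]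
  · intro t h3 htk
    beta_reduce
    have hkk1 : k * (k - 1) + k = k * k := by
      calc k * (k - 1) + k = k * ((k - 1) + 1) := (Nat.mul_succ _ _).symm
        _ = k * k := by rw [show k - 1 + 1 = k from by omega]
    have hjeq : (k - 1) * k + t = k * (k - 1) + t := by rw [Nat.mul_comm]
    rw [hjeq, hval (k * (k - 1) + t) (by omega) (by omega),
      baseB_hi k (k * (k - 1) + t) (by omega) (by omega)]

/-- The 0-sensitivity of the cyclic pattern function is at least
`m = ⌊n/k²⌋`. -/
theorem cycPatFn_sens0_lower {k n : ℕ} (h8 : 8 ≤ k) (hn : k ^ 2 ≤ n)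
    (hpos : 0 < n) :
    n / k ^ 2 ≤ sens0 (cycPatFn k n hpos) := by
  classical
  have hKpos : 0 < k ^ 2 := by positivity
  have hx0 : cycPatFn k n hpos (wit k n) = false := by
    simp only [cycPatFn, decide_eq_false_iff_not]
    rintro ⟨ℓ, hG⟩
    exact wit_no_pat h8 hn hpos ℓ hG
  have hKM : k ^ 2 * (n / k ^ 2) ≤ n := by
    conv_rhs => rw [← Nat.div_add_mod n (k ^ 2)]
    exact Nat.le_add_right _ _
  have hlt : ∀ q, q < n / k ^ 2 → k ^ 2 * q + 1 < n := by
    intro q hq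
    have hkk : k + 56 ≤ k ^ 2 := by nlinarith
    have h1 : k ^ 2 * (q + 1) = k ^ 2 * q + k ^ 2 := Nat.mul_succ _ _
    have h2 : k ^ 2 * (q + 1) ≤ k ^ 2 * (n / k ^ 2) := Nat.mul_le_mul (le_refl _) hq
    omega
  have hsens : n / k ^ 2 ≤ sensAt (cycPatFn k n hpos) (wit k n) := by
    rw [sensAt]
    calc n / k ^ 2 = (Finset.range (n / k ^ 2)).card := (Finset.card_range _).symm
      _ ≤ _ := ?_
    apply Finset.card_le_card_of_injOn
      (fun q => (⟨(k ^ 2 * q + 1) % n, Nat.mod_lt _ hpos⟩ : Fin n))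
    · intro q hq
      rw [Finset.mem_coe, Finset.mem_range] at hq
      have hq1 := hlt q hq
      have hfin : (⟨(k ^ 2 * q + 1) % n, Nat.mod_lt _ hpos⟩ : Fin n)
          = ⟨k ^ 2 * q + 1, hq1⟩ := by
        simp only [Fin.mk.injEq]
        exact Nat.mod_eq_of_lt hq1
      rw [Finset.mem_coe, Finset.mem_filter]
      refine ⟨Finset.mem_univ _, ?_⟩
      beta_reduce
      rw [hfin, hx0]
      have hflip : cycPatFn k n hpos (flipBit (wit k n) ⟨k ^ 2 * q + 1, hq1⟩) = true := by
        simp only [cycPatFn, decide_eq_true_eq]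
        exact ⟨k ^ 2 * q, wit_flip_pat h8 hn hpos hq hq1⟩
      simp [hflip]
    · intro q1 h1 q2 h2 he
      simp only [Finset.coe_range, Set.mem_Iio] at h1 h2
      have l1 := hlt q1 h1
      have l2 := hlt q2 h2
      rw [Fin.mk.injEq, Nat.mod_eq_of_lt l1, Nat.mod_eq_of_lt l2] at he
      exact Nat.eq_of_mul_eq_mul_left hKpos (by omega)
  calc n / k ^ 2 ≤ sensAt (cycPatFn k n hpos) (wit k n) := hsens
    _ ≤ sens0 (cycPatFn k n hpos) := by
      rw [sens0]
      exact Finset.le_sup (Finset.mem_filter.mpr ⟨Finset.mem_univ _, hx0⟩)
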